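/- Let D be a finitely supported probability distribution on [−1,1] satisfying the 3-sample median constraint. Then there exist probability distributions D_1, D_2, D_3 on [−1,1], each supported on at most two points, each with mean equal to E[D], such that for independent samples a_1 ~ D_1, a_2 ~ D_2, a_3 ~ D_3, one has Pr[a_1 + a_2 + a_3 ≤ 0] ≥ 1/2. -/

import Mathlib

open MeasureTheory

/-- A probability distribution `μ` on `[-1,1]` satisfies the `k`-sample median constraint if
for `k` i.i.d. samples `Y_1, …, Y_k ~ μ`, `Pr[Y_1 + ⋯ + Y_k ≤ 0] ≥ 1/2`. -/
def MedianConstraint (k : ℕ) (μ : Measure ℝ) : Prop :=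
  (1 : ENNReal) / 2 ≤ Measure.pi (fun _ : Fin k => μ) {y | ∑ i, y i ≤ 0}

section Auxiliary

open Finset

open Finset

/-- Lemma A: two-point replacement for finitely supported distributions. -/
lemma lemmaA (g : ℝ → ℝ) :
    ∀ (n : ℕ) (s : Finset ℝ), s.card ≤ n → ∀ (p : ℝ → ℝ) (m : ℝ),
    (∀ x ∈ s, 0 ≤ p x) → (∑ x ∈ s, p x = 1) → (∑ x ∈ s, p x * x = m) →
    ∃ a ∈ s, ∃ b ∈ s, ∃ q : ℝ, 0 ≤ q ∧ q ≤ 1 ∧ (1 - q) * a + q * b = m ∧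
      ∑ x ∈ s, p x * g x ≤ (1 - q) * g a + q * g b := by
  intro n
  induction n with
  | zero =>
    intro s hs p m hp h1 hm
    rw [Nat.le_zero, Finset.card_eq_zero] at hs
    subst hs; simp at h1
  | succ n IH =>
    intro s hs p m hp h1 hm
    by_cases hzero : ∃ x ∈ s, p x = 0
    · obtain ⟨x₀, hx₀s, hx₀⟩ := hzero
      have hsum1 : ∑ x ∈ s.erase x₀, p x = 1 := by
        rw [← Finset.add_sum_erase s p hx₀s] at h1; linarith
      have hsum2 : ∑ x ∈ s.erase x₀, p x * x = m := by
        rw [← Finset.add_sum_erase s (fun x => p x * x) hx₀s] at hm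
        rw [hx₀] at hm; linarith [hm]
      have hcard : (s.erase x₀).card ≤ n := by
        have := Finset.card_erase_of_mem hx₀s
        omega
      obtain ⟨a, ha, b, hb, q, hq⟩ := IH (s.erase x₀) hcard p m
        (fun x hx => hp x (Finset.mem_of_mem_erase hx)) hsum1 hsum2
      refine ⟨a, Finset.mem_of_mem_erase ha, b, Finset.mem_of_mem_erase hb, q,
        hq.1, hq.2.1, hq.2.2.1, ?_⟩
      rw [← Finset.add_sum_erase s (fun x => p x * g x) hx₀s, hx₀]
      simpa using hq.2.2.2
    · push_neg at hzero
      have hpos : ∀ x ∈ s, 0 < p x := fun x hx => lt_of_le_of_ne (hp x hx) (Ne.symm (hzero x hx))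
      have hne : s.Nonempty := by
        rcases Finset.eq_empty_or_nonempty s with h | h
        · exfalso; subst h; simp at h1
        · exact h
      by_cases hcard2 : s.card ≤ 2
      · -- small case: s itself is at most two points
        interval_cases h : s.card
        · exfalso; rw [Finset.card_eq_zero] at h; subst h; simp at h1
        · obtain ⟨a, ha⟩ := Finset.card_eq_one.mp h
          subst ha
          simp only [Finset.sum_singleton] at h1 hm ⊢
          have hma : m = a := by rw [← hm, h1, one_mul]
          refine ⟨a, by simp, a, by simp, 0, le_refl _, by norm_num, by rw [hma]; ring, ?_⟩
          rw [h1, one_mul]; norm_num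
        · obtain ⟨a, b, hab, hs2⟩ := Finset.card_eq_two.mp h
          subst hs2
          have has : a ∈ ({a, b} : Finset ℝ) := by simp
          have hbs : b ∈ ({a, b} : Finset ℝ) := by simp
          rw [Finset.sum_insert (by simpa using hab), Finset.sum_singleton] at h1 hm
          have hpa : p a = 1 - p b := by linarith
          refine ⟨a, has, b, hbs, p b, hp b hbs, ?_, ?_, ?_⟩
          · linarith [hp a has]
          · rw [← hpa]; linarith [hm]
          · rw [Finset.sum_insert (by simpa using hab), Finset.sum_singleton, ← hpa]
      · -- main case: at least three points, all weights positive
        push_neg at hcard2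
        have hcard1 : 1 < s.card := by omega
        set u := s.min' hne with hu_def
        set v := s.max' hne with hv_def
        have hus : u ∈ s := s.min'_mem hne
        have hvs : v ∈ s := s.max'_mem hne
        have huv : u < v := Finset.min'_lt_max'_of_card s hcard1
        have hmu : u < m := by
          have h2 : ∑ x ∈ s, p x * (x - u) = m - u := by
            calc ∑ x ∈ s, p x * (x - u) = ∑ x ∈ s, (p x * x - u * p x) :=
                  Finset.sum_congr rfl (fun x _ => by ring)
              _ = (∑ x ∈ s, p x * x) - u * ∑ x ∈ s, p x := by
                  rw [Finset.sum_sub_distrib, ← Finset.mul_sum]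
              _ = m - u := by rw [h1, hm]; ring
          have h3 : p v * (v - u) ≤ ∑ x ∈ s, p x * (x - u) := by
            apply Finset.single_le_sum (f := fun x => p x * (x - u)) _ hvs
            intro x hx
            have hux : u ≤ x := s.min'_le x hx
            have := hp x hx
            nlinarith
          nlinarith [hpos v hvs]
        have hmv : m < v := by
          have h2 : ∑ x ∈ s, p x * (v - x) = v - m := by
            calc ∑ x ∈ s, p x * (v - x) = ∑ x ∈ s, (v * p x - p x * x) :=
                  Finset.sum_congr rfl (fun x _ => by ring)
              _ = v * (∑ x ∈ s, p x) - ∑ x ∈ s, p x * x := by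
                  rw [Finset.sum_sub_distrib, ← Finset.mul_sum]
              _ = v - m := by rw [h1, hm]; ring
          have h3 : p u * (v - u) ≤ ∑ x ∈ s, p x * (v - x) := by
            apply Finset.single_le_sum (f := fun x => p x * (v - x)) _ hus
            intro x hx
            have hxv : x ≤ v := s.le_max' x hx
            have := hp x hx
            nlinarith
          nlinarith [hpos u hus]
        set α := (v - m) / (v - u) with hα_def
        set β := (m - u) / (v - u) with hβ_def
        have hvu : (0:ℝ) < v - u := by linarith
        have hαpos : 0 < α := div_pos (by linarith) hvu
        have hβpos : 0 < β := div_pos (by linarith) hvu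
        have hαβ : α + β = 1 := by rw [hα_def, hβ_def]; field_simp; ring
        have hmean_uv : α * u + β * v = m := by rw [hα_def, hβ_def]; field_simp; ring
        set t := min (p u / α) (p v / β) with ht_def
        have htpos : 0 < t := lt_min (div_pos (hpos u hus) hαpos) (div_pos (hpos v hvs) hβpos)
        have htα : t * α ≤ p u := by
          have h' : t ≤ p u / α := min_le_left _ _
          calc t * α ≤ (p u / α) * α := by nlinarith
            _ = p u := by field_simp
        have htβ : t * β ≤ p v := by
          have h' : t ≤ p v / β := min_le_right _ _
          calc t * β ≤ (p v / β) * β := by nlinarith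
            _ = p v := by field_simp
        have huvne : u ≠ v := ne_of_lt huv
        -- there is a third point
        have hthird : ∃ w ∈ s, w ≠ u ∧ w ≠ v := by
          have hcc : 0 < ((s.erase u).erase v).card := by
            rw [Finset.card_erase_of_mem (Finset.mem_erase.mpr ⟨Ne.symm huvne, hvs⟩),
              Finset.card_erase_of_mem hus]
            omega
          obtain ⟨w, hw⟩ := Finset.card_pos.mp hcc
          rw [Finset.mem_erase, Finset.mem_erase] at hw
          exact ⟨w, hw.2.2, hw.2.1, hw.1⟩
        have ht1 : t < 1 := by
          obtain ⟨w, hws, hwu, hwv⟩ := hthird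
          have hsub : ({u, v, w} : Finset ℝ) ⊆ s := by
            intro x hx; simp at hx; rcases hx with h|h|h <;> subst h <;> assumption
          have e : ∑ i ∈ ({u, v, w} : Finset ℝ), p i = p u + p v + p w := by
            rw [Finset.sum_insert (by simp [huvne, Ne.symm hwu]),
              Finset.sum_insert (by simpa using Ne.symm hwv), Finset.sum_singleton]
            ring
          have hsum3 : p u + p v + p w ≤ ∑ x ∈ s, p x := by
            rw [← e]
            exact Finset.sum_le_sum_of_subset_of_nonneg hsub (fun x hx _ => hp x hx)
          have h4 : t * (α + β) ≤ p u + p v := by nlinarith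
          rw [hαβ, mul_one] at h4
          nlinarith [hpos w hws]
        -- the two-point piece κ and the remainder p'
        set κ : ℝ → ℝ := fun x => if x = u then α else if x = v then β else 0 with hκ_def
        have hκf : ∀ f : ℝ → ℝ, ∑ x ∈ s, κ x * f x = α * f u + β * f v := by
          intro f
          have hsplit : ∀ x, κ x * f x =
              (if x = u then α * f x else 0) + (if x = v then β * f x else 0) := by
            intro x
            by_cases hxu : x = u
            · subst hxu; simp [hκ_def, huvne]
            · by_cases hxv : x = v
              · subst hxv; simp [hκ_def, hxu]
              · simp [hκ_def, hxu, hxv]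
          rw [Finset.sum_congr rfl (fun x _ => hsplit x), Finset.sum_add_distrib,
            Finset.sum_ite_eq' s u (fun x => α * f x), Finset.sum_ite_eq' s v (fun x => β * f x),
            if_pos hus, if_pos hvs]
        set p' : ℝ → ℝ := fun x => p x - t * κ x with hp'_def
        have hp'f : ∀ f : ℝ → ℝ, ∑ x ∈ s, p' x * f x
            = ∑ x ∈ s, p x * f x - t * (α * f u + β * f v) := by
          intro f
          calc ∑ x ∈ s, p' x * f x = ∑ x ∈ s, (p x * f x - t * (κ x * f x)) :=
                Finset.sum_congr rfl (fun x _ => by simp [hp'_def]; ring)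
            _ = ∑ x ∈ s, p x * f x - t * ∑ x ∈ s, κ x * f x := by
                rw [Finset.sum_sub_distrib, ← Finset.mul_sum]
            _ = _ := by rw [hκf f]
        have hp'nonneg : ∀ x ∈ s, 0 ≤ p' x := by
          intro x hx
          by_cases hxu : x = u
          · subst hxu; simp [hp'_def, hκ_def, huvne]; linarith
          · by_cases hxv : x = v
            · subst hxv; simp [hp'_def, hκ_def, hxu]; linarith
            · simp [hp'_def, hκ_def, hxu, hxv]; exact hp x hx
        -- the removed point
        have hκu : κ u = α := by simp [hκ_def]
        have hκv : κ v = β := by simp [hκ_def, (Ne.symm huvne : v ≠ u)]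
        have hremoved : ∃ r ∈ s, p' r = 0 := by
          rcases le_total (p u / α) (p v / β) with hmin | hmin
          · refine ⟨u, hus, ?_⟩
            have ht' : t = p u / α := min_eq_left hmin
            simp only [hp'_def, hκu, ht']
            field_simp
            ring
          · refine ⟨v, hvs, ?_⟩
            have ht' : t = p v / β := min_eq_right hmin
            simp only [hp'_def, hκv, ht']
            field_simp
            ring
        obtain ⟨r, hrs, hr0⟩ := hremoved
        set s' := s.erase r with hs'_def
        have hcard' : s'.card ≤ n := by
          rw [hs'_def, Finset.card_erase_of_mem hrs]; omega
        have h1t : (0:ℝ) < 1 - t := by linarith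
        set p'' : ℝ → ℝ := fun x => p' x / (1 - t) with hp''_def
        have hsum_erase : ∀ f : ℝ → ℝ, ∑ x ∈ s', p' x * f x = ∑ x ∈ s, p' x * f x := by
          intro f
          rw [← Finset.add_sum_erase s (fun x => p' x * f x) hrs, hr0]
          simp
          rfl
        have hp''f : ∀ f : ℝ → ℝ, ∑ x ∈ s', p'' x * f x
            = (∑ x ∈ s, p x * f x - t * (α * f u + β * f v)) / (1 - t) := by
          intro f
          calc ∑ x ∈ s', p'' x * f x = (∑ x ∈ s', p' x * f x) / (1 - t) := by
                rw [Finset.sum_div]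
                exact Finset.sum_congr rfl (fun x _ => by rw [hp''_def]; ring)
            _ = _ := by rw [hsum_erase, hp'f]
        have hp''1 : ∑ x ∈ s', p'' x = 1 := by
          have := hp''f (fun _ => 1)
          simp only [mul_one] at this
          rw [this, h1, hαβ]
          field_simp
        have hp''m : ∑ x ∈ s', p'' x * x = m := by
          have h6 := hp''f id
          simp only [id_eq] at h6
          rw [h6, hm, hmean_uv, div_eq_iff (ne_of_gt h1t)]
          ring
        obtain ⟨a, ha, b, hb, q, hq0, hq1, hqm, hqle⟩ := IH s' hcard' p'' m
          (fun x hx => div_nonneg (hp'nonneg x (Finset.mem_of_mem_erase hx)) (le_of_lt h1t))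
          hp''1 hp''m
        -- combine
        have hval : ∑ x ∈ s, p x * g x
            = (1 - t) * (∑ x ∈ s', p'' x * g x) + t * (α * g u + β * g v) := by
          rw [hp''f g, mul_comm (1 - t), div_mul_cancel₀ _ (ne_of_gt h1t)]
          ring
        have h5 : ∑ x ∈ s', p'' x * g x ≤ (1 - q) * g a + q * g b := hqle
        have h6a : (1 - t) * (∑ x ∈ s', p'' x * g x)
            ≤ (1 - t) * ((1 - q) * g a + q * g b) :=
          mul_le_mul_of_nonneg_left h5 (le_of_lt h1t)
        rcases le_total (α * g u + β * g v) ((1 - q) * g a + q * g b) with hAC | hAC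
        · refine ⟨a, Finset.mem_of_mem_erase ha, b, Finset.mem_of_mem_erase hb, q,
            hq0, hq1, hqm, ?_⟩
          rw [hval]
          have h6b : t * (α * g u + β * g v) ≤ t * ((1 - q) * g a + q * g b) :=
            mul_le_mul_of_nonneg_left hAC (le_of_lt htpos)
          have h8 : (1 - t) * ((1 - q) * g a + q * g b) + t * ((1 - q) * g a + q * g b)
              = (1 - q) * g a + q * g b := by ring
          linarith
        · refine ⟨u, hus, v, hvs, β, le_of_lt hβpos, by linarith, ?_, ?_⟩
          · have h9 : (1:ℝ) - β = α := by linarith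
            rw [h9]; exact hmean_uv
          · have h9 : (1:ℝ) - β = α := by linarith
            rw [h9, hval]
            have h6b : (1 - t) * ((1 - q) * g a + q * g b)
                ≤ (1 - t) * (α * g u + β * g v) :=
              mul_le_mul_of_nonneg_left hAC (le_of_lt h1t)
            have h8 : (1 - t) * (α * g u + β * g v) + t * (α * g u + β * g v)
                = α * g u + β * g v := by ring
            linarith

/-- Product of three finitely-supported measures, evaluated on a measurable set. -/
lemma pi3_apply (t : Fin 3 → Finset ℝ) (c : Fin 3 → ℝ → ENNReal)
    (hc : ∀ i x, c i x ≠ ⊤)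
    {A : Set (Fin 3 → ℝ)} (hA : MeasurableSet A) :
    Measure.pi (fun i => ∑ x ∈ t i, c i x • Measure.dirac x) A
      = ∑ x ∈ t 0, ∑ y ∈ t 1, ∑ z ∈ t 2,
          (c 0 x * c 1 y * c 2 z) * A.indicator 1 ![x, y, z] := by
  have hfin : ∀ i : Fin 3, IsFiniteMeasure ((∑ x ∈ t i, c i x • Measure.dirac x : Measure ℝ)) := by
    intro i
    constructor
    calc (∑ x ∈ t i, c i x • Measure.dirac x : Measure ℝ) Set.univ
        = ∑ x ∈ t i, (c i x • Measure.dirac x : Measure ℝ) Set.univ :=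
          Measure.finset_sum_apply _ _ _
      _ ≤ ∑ x ∈ t i, c i x := Finset.sum_le_sum (fun x _ => by
          rw [Measure.smul_apply, smul_eq_mul, measure_univ, mul_one])
      _ < ⊤ := ENNReal.sum_lt_top.mpr (fun x _ => lt_top_iff_ne_top.mpr (hc i x))
  haveI : ∀ i : Fin 3, SigmaFinite ((∑ x ∈ t i, c i x • Measure.dirac x : Measure ℝ)) :=
    fun i => haveI := hfin i; inferInstance
  have mem_iff : ∀ (s : Fin 3 → Set ℝ) (x y z : ℝ),
      ((![x, y, z] : Fin 3 → ℝ) ∈ Set.univ.pi s) ↔ (x ∈ s 0 ∧ y ∈ s 1 ∧ z ∈ s 2) := by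
    intro s x y z
    rw [Set.mem_univ_pi]
    constructor
    · intro h; exact ⟨h 0, h 1, h 2⟩
    · rintro ⟨h0, h1, h2⟩ i; fin_cases i <;> simpa
  have key : Measure.pi (fun i => ∑ x ∈ t i, c i x • Measure.dirac x)
      = ∑ x ∈ t 0, ∑ y ∈ t 1, ∑ z ∈ t 2,
          (c 0 x * c 1 y * c 2 z) • Measure.dirac (![x, y, z] : Fin 3 → ℝ) := by
    apply Measure.pi_eq
    intro s hs
    have expand : (∑ x ∈ t 0, ∑ y ∈ t 1, ∑ z ∈ t 2,
        (c 0 x * c 1 y * c 2 z) • Measure.dirac (![x, y, z] : Fin 3 → ℝ)) (Set.univ.pi s)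
        = ∑ x ∈ t 0, ∑ y ∈ t 1, ∑ z ∈ t 2, (c 0 x * c 1 y * c 2 z) *
            ((s 0).indicator 1 x * ((s 1).indicator 1 y * (s 2).indicator 1 z)) := by
      rw [Measure.finset_sum_apply]
      refine Finset.sum_congr rfl (fun x _ => ?_)
      rw [Measure.finset_sum_apply]
      refine Finset.sum_congr rfl (fun y _ => ?_)
      rw [Measure.finset_sum_apply]
      refine Finset.sum_congr rfl (fun z _ => ?_)
      rw [Measure.smul_apply, Measure.dirac_apply' _ (MeasurableSet.univ_pi hs), smul_eq_mul]
      congr 1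
      by_cases h0 : x ∈ s 0 <;> by_cases h1 : y ∈ s 1 <;> by_cases h2 : z ∈ s 2 <;>
        simp [Set.indicator_apply, mem_iff s x y z, h0, h1, h2]
    rw [expand]
    have factor : ∑ x ∈ t 0, ∑ y ∈ t 1, ∑ z ∈ t 2, (c 0 x * c 1 y * c 2 z) *
            ((s 0).indicator 1 x * ((s 1).indicator 1 y * (s 2).indicator 1 z))
        = (∑ x ∈ t 0, c 0 x * (s 0).indicator 1 x) *
          ((∑ y ∈ t 1, c 1 y * (s 1).indicator 1 y) *
           (∑ z ∈ t 2, c 2 z * (s 2).indicator 1 z)) := by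
      have inner : ∀ x y, ∑ z ∈ t 2, c 0 x * c 1 y * c 2 z *
          ((s 0).indicator 1 x * ((s 1).indicator 1 y * (s 2).indicator 1 z))
          = (c 0 x * (s 0).indicator 1 x) * ((c 1 y * (s 1).indicator 1 y) *
              (∑ z ∈ t 2, c 2 z * (s 2).indicator 1 z)) := by
        intro x y
        rw [Finset.mul_sum, Finset.mul_sum]
        exact Finset.sum_congr rfl (fun z _ => by ring)
      have mid : ∀ x, ∑ y ∈ t 1, ∑ z ∈ t 2, c 0 x * c 1 y * c 2 z *
          ((s 0).indicator 1 x * ((s 1).indicator 1 y * (s 2).indicator 1 z))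
          = (c 0 x * (s 0).indicator 1 x) * ((∑ y ∈ t 1, c 1 y * (s 1).indicator 1 y) *
              (∑ z ∈ t 2, c 2 z * (s 2).indicator 1 z)) := by
        intro x
        calc ∑ y ∈ t 1, ∑ z ∈ t 2, c 0 x * c 1 y * c 2 z *
            ((s 0).indicator 1 x * ((s 1).indicator 1 y * (s 2).indicator 1 z))
            = ∑ y ∈ t 1, (c 0 x * (s 0).indicator 1 x) * ((c 1 y * (s 1).indicator 1 y) *
                (∑ z ∈ t 2, c 2 z * (s 2).indicator 1 z)) :=
              Finset.sum_congr rfl (fun y _ => inner x y)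
          _ = _ := by
              rw [Finset.sum_mul, Finset.mul_sum]
      calc ∑ x ∈ t 0, ∑ y ∈ t 1, ∑ z ∈ t 2, c 0 x * c 1 y * c 2 z *
          ((s 0).indicator 1 x * ((s 1).indicator 1 y * (s 2).indicator 1 z))
          = ∑ x ∈ t 0, (c 0 x * (s 0).indicator 1 x) *
              ((∑ y ∈ t 1, c 1 y * (s 1).indicator 1 y) *
               (∑ z ∈ t 2, c 2 z * (s 2).indicator 1 z)) :=
            Finset.sum_congr rfl (fun x _ => mid x)
        _ = _ := (Finset.sum_mul _ _ _).symm
    rw [factor, Fin.prod_univ_three]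
    have apply_one : ∀ i : Fin 3, (∑ x ∈ t i, c i x • Measure.dirac x : Measure ℝ) (s i)
        = ∑ x ∈ t i, c i x * (s i).indicator 1 x := by
      intro i
      rw [Measure.finset_sum_apply]
      refine Finset.sum_congr rfl (fun x _ => ?_)
      rw [Measure.smul_apply, Measure.dirac_apply' _ (hs i), smul_eq_mul]
    rw [apply_one 0, apply_one 1, apply_one 2]
    ring
  rw [key, Measure.finset_sum_apply]
  refine Finset.sum_congr rfl (fun x _ => ?_)
  rw [Measure.finset_sum_apply]
  refine Finset.sum_congr rfl (fun y _ => ?_)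
  rw [Measure.finset_sum_apply]
  refine Finset.sum_congr rfl (fun z _ => ?_)
  rw [Measure.smul_apply, Measure.dirac_apply' _ hA, smul_eq_mul]

noncomputable section

/-- Triple weighted sum. -/
def SUM3 (u1 u2 u3 : Finset ℝ) (w1 w2 w3 : ℝ → ℝ) (J : ℝ → ℝ → ℝ → ℝ) : ℝ :=
  ∑ x ∈ u1, ∑ y ∈ u2, ∑ z ∈ u3, w1 x * w2 y * w3 z * J x y z

lemma SUM3_pull (u1 u2 u3 : Finset ℝ) (w1 w2 w3 : ℝ → ℝ) (J : ℝ → ℝ → ℝ → ℝ) :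
    SUM3 u1 u2 u3 w1 w2 w3 J
      = ∑ x ∈ u1, w1 x * (∑ y ∈ u2, ∑ z ∈ u3, w2 y * w3 z * J x y z) := by
  refine Finset.sum_congr rfl (fun x _ => ?_)
  rw [Finset.mul_sum]
  refine Finset.sum_congr rfl (fun y _ => ?_)
  rw [Finset.mul_sum]
  refine Finset.sum_congr rfl (fun z _ => ?_)
  ring

lemma SUM3_swap12 (u1 u2 u3 : Finset ℝ) (w1 w2 w3 : ℝ → ℝ) (J : ℝ → ℝ → ℝ → ℝ) :
    SUM3 u1 u2 u3 w1 w2 w3 J = SUM3 u2 u1 u3 w2 w1 w3 (fun y x z => J x y z) := by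
  rw [SUM3, SUM3, Finset.sum_comm]
  refine Finset.sum_congr rfl (fun y _ => ?_)
  refine Finset.sum_congr rfl (fun x _ => ?_)
  refine Finset.sum_congr rfl (fun z _ => ?_)
  ring

lemma SUM3_swap23 (u1 u2 u3 : Finset ℝ) (w1 w2 w3 : ℝ → ℝ) (J : ℝ → ℝ → ℝ → ℝ) :
    SUM3 u1 u2 u3 w1 w2 w3 J = SUM3 u1 u3 u2 w1 w3 w2 (fun x z y => J x y z) := by
  rw [SUM3, SUM3]
  refine Finset.sum_congr rfl (fun x _ => ?_)
  rw [Finset.sum_comm]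
  refine Finset.sum_congr rfl (fun z _ => ?_)
  refine Finset.sum_congr rfl (fun y _ => ?_)
  ring

/-- canonical two-point weight function -/
def pairw (a b q : ℝ) : ℝ → ℝ := fun x =>
  (if x = a then 1 - q else 0) + (if x = b then q else 0)

lemma pairw_sum (a b q : ℝ) (f : ℝ → ℝ) :
    ∑ x ∈ ({a, b} : Finset ℝ), pairw a b q x * f x = (1 - q) * f a + q * f b := by
  classical
  by_cases hab : a = b
  · subst hab
    simp [pairw]
    ring
  · rw [Finset.sum_insert (by simpa using hab), Finset.sum_singleton]
    simp [pairw, hab, Ne.symm hab]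
    try ring

lemma pairw_nonneg {a b q : ℝ} (h0 : 0 ≤ q) (h1 : q ≤ 1) (x : ℝ) : 0 ≤ pairw a b q x := by
  unfold pairw
  refine add_nonneg ?_ ?_ <;> split <;> linarith

lemma pair_sum_ennreal (a b q : ℝ) (h0 : 0 ≤ q) (h1 : q ≤ 1) (F : ℝ → ENNReal) :
    ∑ x ∈ ({a, b} : Finset ℝ), ENNReal.ofReal (pairw a b q x) * F x
      = ENNReal.ofReal (1 - q) * F a + ENNReal.ofReal q * F b := by
  classical
  by_cases hab : a = b
  · subst hab
    rw [show ({a, a} : Finset ℝ) = {a} by simp, Finset.sum_singleton]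
    have : pairw a a q a = (1 - q) + q := by simp [pairw]
    rw [this, ENNReal.ofReal_add (by linarith) h0, add_mul]
  · rw [Finset.sum_insert (by simpa using hab), Finset.sum_singleton]
    have h1' : pairw a b q a = 1 - q := by simp [pairw, hab]
    have h2' : pairw a b q b = q := by simp [pairw, Ne.symm hab]
    rw [h1', h2']

lemma integrable_dirac'' (x : ℝ) : Integrable (fun y : ℝ => y) (Measure.dirac x) := by
  refine ⟨aestronglyMeasurable_id, ?_⟩
  rw [HasFiniteIntegral, lintegral_dirac]
  exact ENNReal.coe_lt_top

/-- properties of the canonical two-point measure -/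
lemma two_point_apply (a b q : ℝ) {A : Set ℝ} (hA : MeasurableSet A) :
    (∑ x ∈ ({a, b} : Finset ℝ), ENNReal.ofReal (pairw a b q x) • Measure.dirac x) A
      = ∑ x ∈ ({a, b} : Finset ℝ), ENNReal.ofReal (pairw a b q x) * A.indicator 1 x := by
  rw [Measure.finset_sum_apply]
  refine Finset.sum_congr rfl (fun x _ => ?_)
  rw [Measure.smul_apply, Measure.dirac_apply' _ hA, smul_eq_mul]

lemma two_point_prob (a b q : ℝ) (h0 : 0 ≤ q) (h1 : q ≤ 1) :
    IsProbabilityMeasure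
      (∑ x ∈ ({a, b} : Finset ℝ), ENNReal.ofReal (pairw a b q x) • Measure.dirac x) := by
  constructor
  rw [two_point_apply a b q MeasurableSet.univ,
    pair_sum_ennreal a b q h0 h1 (fun x => Set.univ.indicator 1 x)]
  simp [Set.indicator_apply]
  rw [← ENNReal.ofReal_add (by linarith) h0]
  norm_num

lemma two_point_null (a b q : ℝ) :
    (∑ x ∈ ({a, b} : Finset ℝ), ENNReal.ofReal (pairw a b q x) • Measure.dirac x)
      (({a, b} : Set ℝ)ᶜ) = 0 := by
  have hm : MeasurableSet (({a, b} : Set ℝ)ᶜ) :=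
    (Set.Finite.measurableSet (by simp : ({a, b} : Set ℝ).Finite)).compl
  rw [two_point_apply a b q hm]
  refine Finset.sum_eq_zero (fun x hx => ?_)
  have : x ∈ ({a, b} : Set ℝ) := by simpa using hx
  rw [Set.indicator_of_notMem (Set.notMem_compl_iff.mpr this), mul_zero]

lemma two_point_integral (a b q : ℝ) (h0 : 0 ≤ q) (h1 : q ≤ 1) :
    ∫ x, x ∂(∑ x ∈ ({a, b} : Finset ℝ), ENNReal.ofReal (pairw a b q x) • Measure.dirac x)
      = (1 - q) * a + q * b := by
  rw [integral_finset_sum_measure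
    (fun x _ => (integrable_dirac'' x).smul_measure ENNReal.ofReal_ne_top)]
  have : ∀ x ∈ ({a, b} : Finset ℝ),
      ∫ y, y ∂(ENNReal.ofReal (pairw a b q x) • Measure.dirac x) = pairw a b q x * x := by
    intro x hx
    rw [integral_smul_measure, integral_dirac, smul_eq_mul,
      ENNReal.toReal_ofReal (pairw_nonneg h0 h1 x)]
  rw [Finset.sum_congr rfl this, pairw_sum a b q (fun x => x)]

end

end Auxiliary

/-- For every finitely supported probability distribution `μ` on `[-1,1]`
satisfying the 3-sample median constraint, there exist independent two-point distributions
`ν 0, ν 1, ν 2` on `[-1,1]`, each with the same mean as `μ`, such that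
`Pr[a₁ + a₂ + a₃ ≤ 0] ≥ 1/2` for independent samples `aᵢ ~ ν i`. -/
theorem stmt11 (μ : Measure ℝ) [IsProbabilityMeasure μ]
    (hsupp : μ (Set.Icc (-1 : ℝ) 1)ᶜ = 0)
    (hfin : ∃ s : Finset ℝ, μ ((s : Set ℝ))ᶜ = 0)
    (hmed : MedianConstraint 3 μ) :
    ∃ ν : Fin 3 → Measure ℝ,
      (∀ i, IsProbabilityMeasure (ν i)) ∧
      (∀ i, ν i (Set.Icc (-1 : ℝ) 1)ᶜ = 0) ∧
      (∀ i, ∃ a b : ℝ, ν i ({a, b} : Set ℝ)ᶜ = 0) ∧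
      (∀ i, ∫ x, x ∂(ν i) = ∫ x, x ∂μ) ∧
      (1 : ENNReal) / 2 ≤ Measure.pi ν {y | ∑ i, y i ≤ 0} := by
  classical
  obtain ⟨s, hs⟩ := hfin
  set s₀ : Finset ℝ := s.filter (fun x => -1 ≤ x ∧ x ≤ 1) with hs₀def
  have hs₀sub : ∀ x ∈ s₀, x ∈ Set.Icc (-1 : ℝ) 1 := by
    intro x hx
    rw [hs₀def, Finset.mem_filter] at hx
    exact ⟨hx.2.1, hx.2.2⟩
  have hs₀null : μ ((s₀ : Set ℝ))ᶜ = 0 := by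
    have hun : μ (((s : Set ℝ))ᶜ ∪ (Set.Icc (-1 : ℝ) 1)ᶜ) = 0 := measure_union_null hs hsupp
    refine measure_mono_null ?_ hun
    intro x hx
    rw [Set.mem_compl_iff, Finset.mem_coe, hs₀def, Finset.mem_filter] at hx
    rw [not_and_or] at hx
    rcases hx with h | h
    · exact Or.inl h
    · exact Or.inr (by simpa [Set.mem_Icc] using h)
  -- the measure of the support is 1
  have hcoe : ∀ u : Finset ℝ, (u : Set ℝ) = ⋃ x ∈ u, ({x} : Set ℝ) := by
    intro u; ext x; simp
  have hbiu : ∀ u : Finset ℝ, μ (u : Set ℝ) = ∑ x ∈ u, μ {x} := by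
    intro u
    rw [hcoe u, measure_biUnion_finset ?_ (fun x _ => measurableSet_singleton x)]
    intro x _ y _ hxy
    exact Set.disjoint_singleton.mpr hxy
  have hμs₀ : μ (s₀ : Set ℝ) = 1 := by
    have h := measure_add_measure_compl (μ := μ) (s₀.measurableSet : MeasurableSet (s₀ : Set ℝ))
    rw [hs₀null, add_zero, measure_univ] at h
    exact h
  have hsum_w : ∑ x ∈ s₀, μ {x} = 1 := by rw [← hbiu, hμs₀]
  set p : ℝ → ℝ := fun x => (μ {x}).toReal with hpdef
  have hp_nonneg : ∀ x ∈ s₀, 0 ≤ p x := fun x _ => ENNReal.toReal_nonneg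
  have hp1 : ∑ x ∈ s₀, p x = 1 := by
    rw [hpdef]
    rw [← ENNReal.toReal_sum (fun x _ => measure_ne_top μ _)]
    rw [hsum_w]; simp
  set m : ℝ := ∑ x ∈ s₀, p x * x with hmdef
  -- representation of μ as a finite sum of Dirac measures
  have hrep : μ = ∑ x ∈ s₀, μ {x} • Measure.dirac x := by
    ext A hA
    rw [Measure.finset_sum_apply]
    have h1 : ∀ x ∈ s₀, (μ {x} • Measure.dirac x) A = if x ∈ A then μ {x} else 0 := by
      intro x _
      rw [Measure.smul_apply, Measure.dirac_apply' _ hA, smul_eq_mul, Set.indicator_apply]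
      by_cases h : x ∈ A <;> simp [h]
    rw [Finset.sum_congr rfl h1, ← Finset.sum_filter]
    rw [← hbiu]
    have hsub : ((s₀.filter (fun x => x ∈ A) : Finset ℝ) : Set ℝ) = A ∩ (s₀ : Set ℝ) := by
      ext x; simp [and_comm]
    rw [hsub]
    refine le_antisymm ?_ (measure_mono Set.inter_subset_left)
    calc μ A ≤ μ (A ∩ (s₀ : Set ℝ)) + μ (A \ (s₀ : Set ℝ)) := measure_le_inter_add_diff μ A _
      _ = μ (A ∩ (s₀ : Set ℝ)) := by
          have hdiff : μ (A \ (s₀ : Set ℝ)) = 0 :=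
            measure_mono_null (fun x hx => hx.2) hs₀null
          rw [hdiff, add_zero]
  -- mean of μ
  have hmean : ∫ x, x ∂μ = m := by
    conv_lhs => rw [hrep]
    rw [integral_finset_sum_measure
      (fun x _ => (integrable_dirac'' x).smul_measure (measure_ne_top μ _))]
    refine Finset.sum_congr rfl (fun x _ => ?_)
    rw [integral_smul_measure, integral_dirac, smul_eq_mul]
  -- the target set and indicator
  set I : ℝ → ℝ → ℝ → ℝ := fun x y z => if x + y + z ≤ 0 then 1 else 0 with hIdef
  set A : Set (Fin 3 → ℝ) := {y | ∑ i, y i ≤ 0} with hAdef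
  have hAmeas : MeasurableSet A := by
    have hsumm : Measurable (fun y : Fin 3 → ℝ => ∑ i, y i) := by
      exact Finset.measurable_sum _ (fun i _ => measurable_pi_apply i)
    exact measurableSet_le hsumm measurable_const
  have hmem : ∀ x y z : ℝ, ((![x, y, z] : Fin 3 → ℝ) ∈ A) ↔ x + y + z ≤ 0 := by
    intro x y z
    rw [hAdef, Set.mem_setOf_eq, Fin.sum_univ_three]
    simp [Matrix.cons_val_zero, Matrix.cons_val_one, Matrix.head_cons]
  have hind_toReal : ∀ x y z : ℝ,
      (A.indicator (1 : (Fin 3 → ℝ) → ENNReal) ![x, y, z]).toReal = I x y z := by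
    intro x y z
    by_cases h : x + y + z ≤ 0 <;>
      simp [Set.indicator_apply, hmem x y z, h, hIdef]
  have hind_ofReal : ∀ x y z : ℝ,
      A.indicator (1 : (Fin 3 → ℝ) → ENNReal) ![x, y, z] = ENNReal.ofReal (I x y z) := by
    intro x y z
    by_cases h : x + y + z ≤ 0 <;>
      simp [Set.indicator_apply, hmem x y z, h, hIdef]
  have hind_ne_top : ∀ pt : Fin 3 → ℝ,
      A.indicator (1 : (Fin 3 → ℝ) → ENNReal) pt ≠ ⊤ := by
    intro pt
    by_cases h : pt ∈ A <;> simp [Set.indicator_apply, h]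
  -- convert the median constraint into a real triple sum
  have hpi_mu : Measure.pi (fun _ : Fin 3 => μ) A
      = ∑ x ∈ s₀, ∑ y ∈ s₀, ∑ z ∈ s₀,
          (μ {x} * μ {y} * μ {z}) * A.indicator 1 ![x, y, z] := by
    have heq : (fun _ : Fin 3 => μ)
        = (fun i : Fin 3 => ∑ x ∈ (fun _ : Fin 3 => s₀) i,
            (fun (_ : Fin 3) (x : ℝ) => μ {x}) i x • Measure.dirac x) :=
      funext (fun _ => hrep)
    rw [heq, pi3_apply _ _ (fun _ x => measure_ne_top μ _) hAmeas]
  have hT : (1 : ℝ) / 2 ≤ SUM3 s₀ s₀ s₀ p p p I := by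
    have hne : ∑ x ∈ s₀, ∑ y ∈ s₀, ∑ z ∈ s₀,
        (μ {x} * μ {y} * μ {z}) * A.indicator 1 ![x, y, z] ≠ ⊤ := by
      rw [← hpi_mu]
      exact measure_ne_top _ _
    have h2 : ((1 : ENNReal) / 2).toReal
        ≤ (∑ x ∈ s₀, ∑ y ∈ s₀, ∑ z ∈ s₀,
            (μ {x} * μ {y} * μ {z}) * A.indicator 1 ![x, y, z]).toReal := by
      apply ENNReal.toReal_mono hne
      rw [← hpi_mu]
      exact hmed
    have h3 : ((1 : ENNReal) / 2).toReal = (1 : ℝ) / 2 := by norm_num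
    rw [h3] at h2
    refine le_trans h2 (le_of_eq ?_)
    rw [SUM3]
    rw [ENNReal.toReal_sum (fun x hx => ?later1)]
    case later1 =>
      exact ENNReal.sum_ne_top.mpr (fun y _ => ENNReal.sum_ne_top.mpr (fun z _ =>
        ENNReal.mul_ne_top (ENNReal.mul_ne_top (ENNReal.mul_ne_top
          (measure_ne_top μ _) (measure_ne_top μ _)) (measure_ne_top μ _))
          (hind_ne_top _)))
    refine Finset.sum_congr rfl (fun x _ => ?_)
    rw [ENNReal.toReal_sum (fun y _ => ENNReal.sum_ne_top.mpr (fun z _ =>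
      ENNReal.mul_ne_top (ENNReal.mul_ne_top (ENNReal.mul_ne_top
        (measure_ne_top μ _) (measure_ne_top μ _)) (measure_ne_top μ _))
        (hind_ne_top _)))]
    refine Finset.sum_congr rfl (fun y _ => ?_)
    rw [ENNReal.toReal_sum (fun z _ =>
      ENNReal.mul_ne_top (ENNReal.mul_ne_top (ENNReal.mul_ne_top
        (measure_ne_top μ _) (measure_ne_top μ _)) (measure_ne_top μ _))
        (hind_ne_top _))]
    refine Finset.sum_congr rfl (fun z _ => ?_)
    rw [ENNReal.toReal_mul, ENNReal.toReal_mul, ENNReal.toReal_mul, hind_toReal x y z]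
  -- nonnegativity of the indicator value
  have hInn : ∀ x y z : ℝ, 0 ≤ I x y z := by
    intro x y z; rw [hIdef]; dsimp only; split <;> norm_num
  -- === first replacement ===
  obtain ⟨a0, ha0, b0, hb0, q0, hq00, hq01, hq0m, hq0le⟩ :=
    lemmaA (fun x => ∑ y ∈ s₀, ∑ z ∈ s₀, p y * p z * I x y z) s₀.card s₀ le_rfl p m
      hp_nonneg hp1 hmdef.symm
  have h1 : (1:ℝ)/2 ≤ ∑ x ∈ s₀, p x * (∑ y ∈ s₀, ∑ z ∈ s₀, p y * p z * I x y z) := by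
    rw [← SUM3_pull s₀ s₀ s₀ p p p I]; exact hT
  have h2 : (1:ℝ)/2 ≤ (1 - q0) * (∑ y ∈ s₀, ∑ z ∈ s₀, p y * p z * I a0 y z)
      + q0 * (∑ y ∈ s₀, ∑ z ∈ s₀, p y * p z * I b0 y z) := le_trans h1 hq0le
  set P0 : Finset ℝ := {a0, b0} with hP0def
  set c0 : ℝ → ℝ := pairw a0 b0 q0 with hc0def
  have hc0nn : ∀ x, 0 ≤ c0 x := pairw_nonneg hq00 hq01
  have h3 : (1:ℝ)/2 ≤ SUM3 P0 s₀ s₀ c0 p p I := by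
    rw [SUM3_pull P0 s₀ s₀ c0 p p I, hc0def, hP0def,
      pairw_sum a0 b0 q0 (fun x => ∑ y ∈ s₀, ∑ z ∈ s₀, p y * p z * I x y z)]
    exact h2
  -- === second replacement ===
  have h4 : (1:ℝ)/2 ≤ SUM3 s₀ P0 s₀ p c0 p (fun y x z => I x y z) := by
    rw [SUM3_swap12 P0 s₀ s₀ c0 p p I] at h3; exact h3
  obtain ⟨a1, ha1, b1, hb1, q1, hq10, hq11, hq1m, hq1le⟩ :=
    lemmaA (fun y => ∑ x ∈ P0, ∑ z ∈ s₀, c0 x * p z * I x y z) s₀.card s₀ le_rfl p m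
      hp_nonneg hp1 hmdef.symm
  have h5 : (1:ℝ)/2 ≤ ∑ y ∈ s₀, p y * (∑ x ∈ P0, ∑ z ∈ s₀, c0 x * p z * I x y z) := by
    rw [SUM3_pull s₀ P0 s₀ p c0 p (fun y x z => I x y z)] at h4; exact h4
  have h6 : (1:ℝ)/2 ≤ (1 - q1) * (∑ x ∈ P0, ∑ z ∈ s₀, c0 x * p z * I x a1 z)
      + q1 * (∑ x ∈ P0, ∑ z ∈ s₀, c0 x * p z * I x b1 z) := le_trans h5 hq1le
  set P1 : Finset ℝ := {a1, b1} with hP1def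
  set c1 : ℝ → ℝ := pairw a1 b1 q1 with hc1def
  have hc1nn : ∀ x, 0 ≤ c1 x := pairw_nonneg hq10 hq11
  have h7 : (1:ℝ)/2 ≤ SUM3 P1 P0 s₀ c1 c0 p (fun y x z => I x y z) := by
    rw [SUM3_pull P1 P0 s₀ c1 c0 p (fun y x z => I x y z), hc1def, hP1def,
      pairw_sum a1 b1 q1 (fun y => ∑ x ∈ P0, ∑ z ∈ s₀, c0 x * p z * I x y z)]
    exact h6
  -- === third replacement ===
  have h8 : (1:ℝ)/2 ≤ SUM3 P1 s₀ P0 c1 p c0 (fun y z x => I x y z) := by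
    rw [SUM3_swap23 P1 P0 s₀ c1 c0 p (fun y x z => I x y z)] at h7; exact h7
  have h9 : (1:ℝ)/2 ≤ SUM3 s₀ P1 P0 p c1 c0 (fun z y x => I x y z) := by
    rw [SUM3_swap12 P1 s₀ P0 c1 p c0 (fun y z x => I x y z)] at h8; exact h8
  obtain ⟨a2, ha2, b2, hb2, q2, hq20, hq21, hq2m, hq2le⟩ :=
    lemmaA (fun z => ∑ y ∈ P1, ∑ x ∈ P0, c1 y * c0 x * I x y z) s₀.card s₀ le_rfl p m
      hp_nonneg hp1 hmdef.symm
  have h10 : (1:ℝ)/2 ≤ ∑ z ∈ s₀, p z * (∑ y ∈ P1, ∑ x ∈ P0, c1 y * c0 x * I x y z) := by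
    rw [SUM3_pull s₀ P1 P0 p c1 c0 (fun z y x => I x y z)] at h9; exact h9
  have h11 : (1:ℝ)/2 ≤ (1 - q2) * (∑ y ∈ P1, ∑ x ∈ P0, c1 y * c0 x * I x y a2)
      + q2 * (∑ y ∈ P1, ∑ x ∈ P0, c1 y * c0 x * I x y b2) := le_trans h10 hq2le
  set P2 : Finset ℝ := {a2, b2} with hP2def
  set c2 : ℝ → ℝ := pairw a2 b2 q2 with hc2def
  have hc2nn : ∀ x, 0 ≤ c2 x := pairw_nonneg hq20 hq21
  have h12 : (1:ℝ)/2 ≤ SUM3 P2 P1 P0 c2 c1 c0 (fun z y x => I x y z) := by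
    rw [SUM3_pull P2 P1 P0 c2 c1 c0 (fun z y x => I x y z), hc2def, hP2def,
      pairw_sum a2 b2 q2 (fun z => ∑ y ∈ P1, ∑ x ∈ P0, c1 y * c0 x * I x y z)]
    exact h11
  -- === reorder back to (x, y, z) ===
  have h13 : (1:ℝ)/2 ≤ SUM3 P1 P2 P0 c1 c2 c0 (fun y z x => I x y z) := by
    rw [SUM3_swap12 P2 P1 P0 c2 c1 c0 (fun z y x => I x y z)] at h12; exact h12
  have h14 : (1:ℝ)/2 ≤ SUM3 P1 P0 P2 c1 c0 c2 (fun y x z => I x y z) := by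
    rw [SUM3_swap23 P1 P2 P0 c1 c2 c0 (fun y z x => I x y z)] at h13; exact h13
  have hfinal : (1:ℝ)/2 ≤ SUM3 P0 P1 P2 c0 c1 c2 I := by
    rw [SUM3_swap12 P1 P0 P2 c1 c0 c2 (fun y x z => I x y z)] at h14; exact h14
  -- === construct the measures ===
  set PV : Fin 3 → Finset ℝ := ![P0, P1, P2] with hPVdef
  set cV : Fin 3 → ℝ → ℝ := ![c0, c1, c2] with hcVdef
  refine ⟨fun i => ∑ x ∈ PV i, ENNReal.ofReal (cV i x) • Measure.dirac x,
    ?_, ?_, ?_, ?_, ?_⟩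
  · intro i
    fin_cases i
    · exact two_point_prob a0 b0 q0 hq00 hq01
    · exact two_point_prob a1 b1 q1 hq10 hq11
    · exact two_point_prob a2 b2 q2 hq20 hq21
  · intro i
    have hsubset : ∀ (a b : ℝ), a ∈ Set.Icc (-1:ℝ) 1 → b ∈ Set.Icc (-1:ℝ) 1 →
        (Set.Icc (-1:ℝ) 1)ᶜ ⊆ (({a, b} : Set ℝ))ᶜ := by
      intro a b haI hbI
      refine Set.compl_subset_compl.mpr ?_
      intro x hx
      rcases hx with h | h
      · exact h ▸ haI
      · exact h ▸ hbI
    fin_cases i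
    · exact measure_mono_null (hsubset a0 b0 (hs₀sub a0 ha0) (hs₀sub b0 hb0))
        (two_point_null a0 b0 q0)
    · exact measure_mono_null (hsubset a1 b1 (hs₀sub a1 ha1) (hs₀sub b1 hb1))
        (two_point_null a1 b1 q1)
    · exact measure_mono_null (hsubset a2 b2 (hs₀sub a2 ha2) (hs₀sub b2 hb2))
        (two_point_null a2 b2 q2)
  · intro i
    fin_cases i
    · exact ⟨a0, b0, two_point_null a0 b0 q0⟩
    · exact ⟨a1, b1, two_point_null a1 b1 q1⟩
    · exact ⟨a2, b2, two_point_null a2 b2 q2⟩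
  · intro i
    rw [hmean]
    fin_cases i
    · show ∫ x, x ∂(∑ x ∈ P0, ENNReal.ofReal (c0 x) • Measure.dirac x) = m
      rw [hc0def, hP0def, two_point_integral a0 b0 q0 hq00 hq01]; exact hq0m
    · show ∫ x, x ∂(∑ x ∈ P1, ENNReal.ofReal (c1 x) • Measure.dirac x) = m
      rw [hc1def, hP1def, two_point_integral a1 b1 q1 hq10 hq11]; exact hq1m
    · show ∫ x, x ∂(∑ x ∈ P2, ENNReal.ofReal (c2 x) • Measure.dirac x) = m
      rw [hc2def, hP2def, two_point_integral a2 b2 q2 hq20 hq21]; exact hq2m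
  · -- the final probability bound
    have hpi : Measure.pi (fun i => ∑ x ∈ PV i, ENNReal.ofReal (cV i x) • Measure.dirac x) A
        = ∑ x ∈ PV 0, ∑ y ∈ PV 1, ∑ z ∈ PV 2,
            (ENNReal.ofReal (cV 0 x) * ENNReal.ofReal (cV 1 y) * ENNReal.ofReal (cV 2 z))
              * A.indicator 1 ![x, y, z] :=
      pi3_apply PV (fun i x => ENNReal.ofReal (cV i x))
        (fun _ _ => ENNReal.ofReal_ne_top) hAmeas
    rw [hpi]
    have hPV0 : PV 0 = P0 := rfl
    have hPV1 : PV 1 = P1 := rfl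
    have hPV2 : PV 2 = P2 := rfl
    have hcV0 : cV 0 = c0 := rfl
    have hcV1 : cV 1 = c1 := rfl
    have hcV2 : cV 2 = c2 := rfl
    rw [hPV0, hPV1, hPV2, hcV0, hcV1, hcV2]
    have hsum_eq : ∑ x ∈ P0, ∑ y ∈ P1, ∑ z ∈ P2,
        (ENNReal.ofReal (c0 x) * ENNReal.ofReal (c1 y) * ENNReal.ofReal (c2 z))
          * A.indicator 1 ![x, y, z]
        = ENNReal.ofReal (SUM3 P0 P1 P2 c0 c1 c2 I) := by
      rw [SUM3, ENNReal.ofReal_sum_of_nonneg (fun x _ =>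
        Finset.sum_nonneg (fun y _ => Finset.sum_nonneg (fun z _ =>
          mul_nonneg (mul_nonneg (mul_nonneg (hc0nn x) (hc1nn y)) (hc2nn z)) (hInn x y z))))]
      refine Finset.sum_congr rfl (fun x _ => ?_)
      rw [ENNReal.ofReal_sum_of_nonneg (fun y _ => Finset.sum_nonneg (fun z _ =>
        mul_nonneg (mul_nonneg (mul_nonneg (hc0nn x) (hc1nn y)) (hc2nn z)) (hInn x y z)))]
      refine Finset.sum_congr rfl (fun y _ => ?_)
      rw [ENNReal.ofReal_sum_of_nonneg (fun z _ =>
        mul_nonneg (mul_nonneg (mul_nonneg (hc0nn x) (hc1nn y)) (hc2nn z)) (hInn x y z))]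
      refine Finset.sum_congr rfl (fun z _ => ?_)
      rw [ENNReal.ofReal_mul (mul_nonneg (mul_nonneg (hc0nn x) (hc1nn y)) (hc2nn z)),
        ENNReal.ofReal_mul (mul_nonneg (hc0nn x) (hc1nn y)),
        ENNReal.ofReal_mul (hc0nn x), hind_ofReal x y z]
    rw [hsum_eq]
    have hhalf : (1 : ENNReal) / 2 = ENNReal.ofReal (1/2) := by
      rw [ENNReal.ofReal_div_of_pos (by norm_num)]
      norm_num
    rw [hhalf]
    exact ENNReal.ofReal_le_ofReal hfinal
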